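/- Let S = {1,…,N} with its standard order and (C, Γ1, Γ2) an associative BD-structure on S with α0 = (N,1) ∉ Γ2. Set Γ1' = Γ1 ∖ {α0} and Γ2' = (C×C)(Γ1'). Then (C, Γ1', Γ2') is again an associative BD-structure on S with α0 ∉ Γ2', and the function r'(x; y, y') attached to (C, Γ1', Γ2') by the standard formula satisfies r'(x; y, y') = a(x) + (y/(y'−y))·P for all admissible x, y, y', where a(x) = (1−x^N)^{-1} Σ_{i∈S} Σ_{k=0}^{N−1} x^k e_{ii}⊗e_{C^k(i),C^k(i)} + Σ_{α>0} e_α⊗e_{−α} + Σ_{k≥1, α∈P(k), α>0} [x^k e_α⊗e_{−τ^k(α)} − x^{−k} e_{−τ^k(α)}⊗e_α] is computed from the original structure (C, Γ1, Γ2), and P = Σ_{i,j} e_{ij}⊗e_{ji}. -/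

import Mathlib

open scoped TensorProduct
noncomputable section

/-- The algebra of `S × S` complex matrices. -/
abbrev Mat (S : Type) := Matrix S S ℂ
/-- `A ⊗ A`. -/
abbrev TT (S : Type) := Mat S ⊗[ℂ] Mat S
/-- `A ⊗ A ⊗ A`. -/
abbrev TTT (S : Type) := Mat S ⊗[ℂ] (Mat S ⊗[ℂ] Mat S)

variable (S : Type) [Fintype S] [DecidableEq S]

/-- Matrix units `e_{ij}`. -/
def E (i j : S) : Mat S := Matrix.single i j 1

/-- `x^{12}`: `a ⊗ b ↦ a ⊗ b ⊗ 1`. -/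
def leg12 : TT S →ₐ[ℂ] TTT S :=
  Algebra.TensorProduct.map (AlgHom.id ℂ (Mat S))
    (Algebra.TensorProduct.includeLeft (R := ℂ) (A := Mat S) (B := Mat S))

/-- `x^{13}`: `a ⊗ b ↦ a ⊗ 1 ⊗ b`. -/
def leg13 : TT S →ₐ[ℂ] TTT S :=
  Algebra.TensorProduct.map (AlgHom.id ℂ (Mat S))
    (Algebra.TensorProduct.includeRight (R := ℂ) (A := Mat S) (B := Mat S))

/-- `x^{23}`: `a ⊗ b ↦ 1 ⊗ a ⊗ b`. -/
def leg23 : TT S →ₐ[ℂ] TTT S :=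
  Algebra.TensorProduct.includeRight (R := ℂ) (A := Mat S) (B := TT S)

/-- `x^{21}`: `a ⊗ b ↦ b ⊗ a`. -/
def flip21 : TT S →ₐ[ℂ] TT S :=
  (Algebra.TensorProduct.comm ℂ (Mat S) (Mat S)).toAlgHom

/-- Membership in `P_ι` (for `Γ = Γ_ι ⊆ Γ_{C0}`). -/
def inP (C0 : Equiv.Perm S) (Γ : Set (S × S)) (p : S × S) : Prop :=
  ∃ m : ℕ, 1 ≤ m ∧ p.2 = (C0 ^ m) p.1 ∧
    ∀ j : ℕ, j < m → ((C0 ^ j) p.1, (C0 ^ (j + 1)) p.1) ∈ Γ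

/-- `τ^k` is defined at `p`, i.e. `p ∈ P(k)`. -/
def tauDef (C0 C : Equiv.Perm S) (Γ1 : Set (S × S)) (k : ℕ) (p : S × S) : Prop :=
  ∀ l : ℕ, l < k → inP S C0 Γ1 ((C ^ l) p.1, (C ^ l) p.2)

variable (N : ℕ) [NeZero N]

/-- The successor cyclic permutation `C0` of `Fin N` (i.e. of `S = {1,…,N}` in its
standard cyclic order). -/
def C0std : Equiv.Perm (Fin N) := Equiv.addRight (1 : Fin N)

/-- `α0 = (N, 1)`, i.e. `(max, min)` of `Fin N`. -/
def alpha0 : Fin N × Fin N := ((0 - 1 : Fin N), (0 : Fin N))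

/-- The constant part `r_const(x, z)`. -/
def rConst (C : Equiv.Perm (Fin N)) (x z : ℂ) : TT (Fin N) :=
  (z * (1 - z)⁻¹) • ∑ p ∈ Finset.univ.filter (fun p : Fin N × Fin N => p.1 < p.2),
      E (Fin N) p.2 p.1 ⊗ₜ[ℂ] E (Fin N) p.1 p.2
  + (1 - z)⁻¹ • ∑ p ∈ Finset.univ.filter (fun p : Fin N × Fin N => p.1 < p.2),
      E (Fin N) p.1 p.2 ⊗ₜ[ℂ] E (Fin N) p.2 p.1
  + (z * (1 - z)⁻¹) • ∑ i : Fin N, E (Fin N) i i ⊗ₜ[ℂ] E (Fin N) i i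
  + (1 - x ^ N)⁻¹ • ∑ i : Fin N, ∑ k ∈ Finset.range N,
      x ^ k • (E (Fin N) i i ⊗ₜ[ℂ] E (Fin N) ((C ^ k) i) ((C ^ k) i))

open Classical in
/-- The `r`-matrix `r(x; y, y')` in multiplicative variables (note that `P(k) = ∅` for
`k ≥ N`, so summing `k` over `[1, N]` is the same as summing over all `k ≥ 1`). -/
def rX (C : Equiv.Perm (Fin N)) (Γ1 : Set (Fin N × Fin N)) (x y y' : ℂ) : TT (Fin N) :=
  rConst N C x (y / y')
  + ∑ k ∈ Finset.Icc 1 N, ∑ p : Fin N × Fin N,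
      if tauDef (Fin N) (C0std N) C Γ1 k p ∧ p.1 < p.2 then
        x ^ k • (E (Fin N) p.1 p.2 ⊗ₜ[ℂ] E (Fin N) ((C ^ k) p.2) ((C ^ k) p.1))
          - x⁻¹ ^ k • (E (Fin N) ((C ^ k) p.2) ((C ^ k) p.1) ⊗ₜ[ℂ] E (Fin N) p.1 p.2)
      else 0
  + ∑ k ∈ Finset.Icc 1 N, ∑ p : Fin N × Fin N,
      if tauDef (Fin N) (C0std N) C Γ1 k p ∧ p.2 < p.1 then
        (y * x ^ k) • (E (Fin N) p.1 p.2 ⊗ₜ[ℂ] E (Fin N) ((C ^ k) p.2) ((C ^ k) p.1))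
          - (y' * x⁻¹ ^ k) • (E (Fin N) ((C ^ k) p.2) ((C ^ k) p.1) ⊗ₜ[ℂ] E (Fin N) p.1 p.2)
      else 0
/-- The permutation tensor `P = Σ_{i,j} e_{ij} ⊗ e_{ji}`. -/
def Ptensor : TT (Fin N) :=
  ∑ p : Fin N × Fin N, E (Fin N) p.1 p.2 ⊗ₜ[ℂ] E (Fin N) p.2 p.1

open Classical in
/-- The function `a(x)` computed from the structure `(C, Γ1, Γ2)`. -/
def aFun (C : Equiv.Perm (Fin N)) (Γ1 : Set (Fin N × Fin N)) (x : ℂ) : TT (Fin N) :=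
  (1 - x ^ N)⁻¹ • ∑ i : Fin N, ∑ k ∈ Finset.range N,
      x ^ k • (E (Fin N) i i ⊗ₜ[ℂ] E (Fin N) ((C ^ k) i) ((C ^ k) i))
  + ∑ p ∈ Finset.univ.filter (fun p : Fin N × Fin N => p.1 < p.2),
      E (Fin N) p.1 p.2 ⊗ₜ[ℂ] E (Fin N) p.2 p.1
  + ∑ k ∈ Finset.Icc 1 N, ∑ p : Fin N × Fin N,
      if tauDef (Fin N) (C0std N) C Γ1 k p ∧ p.1 < p.2 then
        x ^ k • (E (Fin N) p.1 p.2 ⊗ₜ[ℂ] E (Fin N) ((C ^ k) p.2) ((C ^ k) p.1))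
          - x⁻¹ ^ k • (E (Fin N) ((C ^ k) p.2) ((C ^ k) p.1) ⊗ₜ[ℂ] E (Fin N) p.1 p.2)
      else 0


section helpers
open Fin.NatCast Fin.CommRing

variable {N : ℕ} [NeZero N]

lemma c0pow (j : ℕ) (s : Fin N) : (C0std N ^ j) s = s + (j : Fin N) := by
  induction j generalizing s with
  | zero => simp
  | succ n ih =>
    rw [pow_succ, Equiv.Perm.mul_apply]
    show (C0std N ^ n) (Equiv.addRight 1 s) = _
    rw [ih]
    simp only [Equiv.coe_addRight]
    push_cast
    ring

lemma val_add_nat (s : Fin N) (j : ℕ) : (s + (j : Fin N)).val = (s.val + j) % N := by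
  rw [Fin.add_def, Fin.val_natCast]
  conv_rhs => rw [Nat.add_mod]
  simp [Nat.mod_mod_of_dvd]

lemma eq_neg_one_iff (s : Fin N) : s = 0 - 1 ↔ s.val = N - 1 := by
  have hN := Nat.pos_of_ne_zero (NeZero.ne N)
  rw [eq_sub_iff_add_eq]
  have h1 : s + 1 = s + ((1:ℕ) : Fin N) := by norm_cast
  rw [h1, Fin.ext_iff, val_add_nat]
  simp only [Fin.val_zero]
  have := s.isLt
  constructor
  · intro h
    rcases Nat.lt_or_ge (s.val + 1) N with h'|h'
    · rw [Nat.mod_eq_of_lt h'] at h; omega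
    · omega
  · intro h
    have h2 : s.val + 1 = N := by omega
    rw [h2, Nat.mod_self]

lemma step_eq_alpha0 {j : ℕ} {s : Fin N} (h : (C0std N ^ j) s = 0 - 1) :
    ((C0std N ^ j) s, (C0std N ^ (j+1)) s) = alpha0 N := by
  have h2 : (C0std N ^ (j+1)) s = C0std N ((C0std N ^ j) s) := by
    rw [pow_succ', Equiv.Perm.mul_apply]
  rw [h2, h, alpha0]
  show (_, (0:Fin N) - 1 + 1) = _
  simp

-- m < N if all steps lie in a proper subset of Γ_{C0}
lemma mlt {Γ : Set (Fin N × Fin N)} (hΓ : Γ ⊂ {p : Fin N × Fin N | p.2 = C0std N p.1})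
    (s : Fin N) (m : ℕ)
    (hsteps : ∀ j, j < m → ((C0std N ^ j) s, (C0std N ^ (j + 1)) s) ∈ Γ) : m < N := by
  by_contra hm
  push_neg at hm
  obtain ⟨q, hq, hqn⟩ := Set.exists_of_ssubset hΓ
  have hq' : q.2 = C0std N q.1 := hq
  set j := (q.1 - s).val with hj
  have hjN : j < N := (q.1 - s).isLt
  have hcast : ((j : ℕ) : Fin N) = q.1 - s := Fin.cast_val_eq_self _
  have h1 : (C0std N ^ j) s = q.1 := by rw [c0pow, hcast]; ring
  have h2 : (C0std N ^ (j+1)) s = q.2 := by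
    rw [pow_succ', Equiv.Perm.mul_apply, h1]
    exact hq'.symm
  have := hsteps j (lt_of_lt_of_le hjN hm)
  rw [h1, h2] at this
  exact hqn this

end helpers

section helpers2
variable {N : ℕ} [NeZero N]

lemma inP_pos {Γ : Set (Fin N × Fin N)} (hsub : Γ ⊆ {p : Fin N × Fin N | p.2 = C0std N p.1})
    (hα : alpha0 N ∉ Γ) {p : Fin N × Fin N} (h : inP (Fin N) (C0std N) Γ p) : p.1 < p.2 := by
  obtain ⟨m, hm, hp2, hsteps⟩ := h
  have hstep_ne : ∀ j, j < m → (p.1.val + j) % N ≠ N - 1 := by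
    intro j hj hmod
    have h1 : (C0std N ^ j) p.1 = 0 - 1 := by
      rw [eq_neg_one_iff, c0pow, val_add_nat]; exact hmod
    exact hα (step_eq_alpha0 h1 ▸ hsteps j hj)
  have hval := p.1.isLt
  have hN := Nat.pos_of_ne_zero (NeZero.ne N)
  have hle : p.1.val + m ≤ N - 1 := by
    by_contra hc
    push_neg at hc
    have hj : N - 1 - p.1.val < m := by omega
    have h2 := hstep_ne _ hj
    rw [show p.1.val + (N - 1 - p.1.val) = N - 1 by omega, Nat.mod_eq_of_lt (by omega)] at h2
    exact h2 rfl
  have h3 : p.2.val = p.1.val + m := by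
    rw [hp2, c0pow, val_add_nat, Nat.mod_eq_of_lt (by omega)]
  rw [Fin.lt_def, h3]; omega

lemma inP_avoid {Γ1 : Set (Fin N × Fin N)}
    (hΓ1 : Γ1 ⊂ {p : Fin N × Fin N | p.2 = C0std N p.1}) {p : Fin N × Fin N}
    (h : inP (Fin N) (C0std N) Γ1 p) (hlt : p.1 < p.2) :
    inP (Fin N) (C0std N) (Γ1 \ {alpha0 N}) p := by
  obtain ⟨m, hm, hp2, hsteps⟩ := h
  have hmN : m < N := mlt hΓ1 p.1 m hsteps
  have hval := p.1.isLt
  rw [Fin.lt_def] at hlt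
  have hp2v : p.2.val = (p.1.val + m) % N := by rw [hp2, c0pow, val_add_nat]
  have hlt' : p.1.val + m < N := by
    by_contra hc
    push_neg at hc
    have h2 : p.1.val + m - N < N := by omega
    rw [Nat.mod_eq_sub_mod hc, Nat.mod_eq_of_lt h2] at hp2v
    omega
  refine ⟨m, hm, hp2, fun j hj => ⟨hsteps j hj, ?_⟩⟩
  simp only [Set.mem_singleton_iff]
  intro heq
  simp only [alpha0, Prod.ext_iff] at heq
  have h5 := heq.1
  rw [eq_neg_one_iff, c0pow, val_add_nat, Nat.mod_eq_of_lt (by omega)] at h5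
  omega

lemma chain_shift {C : Equiv.Perm (Fin N)} {Γ1 Γ2 : Set (Fin N × Fin N)}
    (hmap : (fun p : Fin N × Fin N => (C p.1, C p.2)) '' Γ1 = Γ2)
    (hΓ2 : Γ2 ⊆ {p : Fin N × Fin N | p.2 = C0std N p.1})
    (s : Fin N) (m : ℕ)
    (hsteps : ∀ j, j < m → ((C0std N ^ j) s, (C0std N ^ (j + 1)) s) ∈ Γ1) :
    ∀ j, j ≤ m → C ((C0std N ^ j) s) = (C0std N ^ j) (C s) := by
  intro j
  induction j with
  | zero => intro _; simp
  | succ n ih =>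
    intro hn
    have hmem : ((C0std N ^ n) s, (C0std N ^ (n+1)) s) ∈ Γ1 := hsteps n (by omega)
    have h2 : (C ((C0std N ^ n) s), C ((C0std N ^ (n+1)) s)) ∈ Γ2 := by
      rw [← hmap]; exact ⟨_, hmem, rfl⟩
    have h3 : C ((C0std N ^ (n+1)) s) = C0std N (C ((C0std N ^ n) s)) := hΓ2 h2
    rw [h3, ih (by omega), ← Equiv.Perm.mul_apply, ← pow_succ']

lemma chain_shift_steps {C : Equiv.Perm (Fin N)} {Γ1 Γ2 : Set (Fin N × Fin N)}
    (hmap : (fun p : Fin N × Fin N => (C p.1, C p.2)) '' Γ1 = Γ2)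
    (hΓ2 : Γ2 ⊆ {p : Fin N × Fin N | p.2 = C0std N p.1})
    (s : Fin N) (m : ℕ)
    (hsteps : ∀ j, j < m → ((C0std N ^ j) s, (C0std N ^ (j + 1)) s) ∈ Γ1) :
    ∀ j, j < m → ((C0std N ^ j) (C s), (C0std N ^ (j + 1)) (C s)) ∈ Γ2 := by
  intro j hj
  have h2 : (C ((C0std N ^ j) s), C ((C0std N ^ (j+1)) s)) ∈ Γ2 := by
    rw [← hmap]; exact ⟨_, hsteps j hj, rfl⟩
  rwa [chain_shift hmap hΓ2 s m hsteps j (le_of_lt hj),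
    chain_shift hmap hΓ2 s m hsteps (j+1) hj] at h2

lemma key {C : Equiv.Perm (Fin N)} {Γ1 Γ2 : Set (Fin N × Fin N)}
    (hΓ1 : Γ1 ⊂ {p : Fin N × Fin N | p.2 = C0std N p.1})
    (hΓ2 : Γ2 ⊂ {p : Fin N × Fin N | p.2 = C0std N p.1})
    (hmap : (fun p : Fin N × Fin N => (C p.1, C p.2)) '' Γ1 = Γ2)
    (hα0 : alpha0 N ∉ Γ2)
    (q : Fin N × Fin N) (h1 : inP (Fin N) (C0std N) Γ1 q)
    (h2 : inP (Fin N) (C0std N) Γ1 (C q.1, C q.2)) :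
    inP (Fin N) (C0std N) (Γ1 \ {alpha0 N}) (C q.1, C q.2) := by
  obtain ⟨m, hm, hq2, hsteps⟩ := h1
  obtain ⟨m', hm', hq2', hsteps'⟩ := h2
  have hshift := chain_shift hmap hΓ2.subset q.1 m hsteps
  have hsteps2 := chain_shift_steps hmap hΓ2.subset q.1 m hsteps
  have hCq2 : C q.2 = (C0std N ^ m) (C q.1) := by
    rw [hq2]; exact hshift m le_rfl
  have hmN : m < N := mlt hΓ2 (C q.1) m hsteps2
  have hm'N : m' < N := mlt hΓ1 (C q.1) m' hsteps'
  have hmm : m = m' := by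
    have h4 : (C0std N ^ m) (C q.1) = (C0std N ^ m') (C q.1) := by
      rw [← hCq2]; exact hq2'
    rw [c0pow, c0pow] at h4
    have h5 := congrArg Fin.val (add_left_cancel h4)
    rwa [Fin.val_natCast, Fin.val_natCast, Nat.mod_eq_of_lt hmN,
      Nat.mod_eq_of_lt hm'N] at h5
  subst hmm
  refine ⟨m, hm, hq2', fun j hj => ⟨hsteps' j hj, ?_⟩⟩
  simp only [Set.mem_singleton_iff]
  intro heq
  exact hα0 (heq ▸ hsteps2 j hj)

lemma tau_mono {C : Equiv.Perm (Fin N)} {Γ1 : Set (Fin N × Fin N)} {k : ℕ} {p : Fin N × Fin N}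
    (h : tauDef (Fin N) (C0std N) C (Γ1 \ {alpha0 N}) k p) :
    tauDef (Fin N) (C0std N) C Γ1 k p := by
  intro l hl
  obtain ⟨m, hm, h2, hsteps⟩ := h l hl
  exact ⟨m, hm, h2, fun j hj => (hsteps j hj).1⟩

lemma tau_back {C : Equiv.Perm (Fin N)} {Γ1 Γ2 : Set (Fin N × Fin N)}
    (hΓ1 : Γ1 ⊂ {p : Fin N × Fin N | p.2 = C0std N p.1})
    (hΓ2 : Γ2 ⊂ {p : Fin N × Fin N | p.2 = C0std N p.1})
    (hmap : (fun p : Fin N × Fin N => (C p.1, C p.2)) '' Γ1 = Γ2)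
    (hα0 : alpha0 N ∉ Γ2) {k : ℕ} {p : Fin N × Fin N} (hp : p.1 < p.2)
    (h : tauDef (Fin N) (C0std N) C Γ1 k p) :
    tauDef (Fin N) (C0std N) C (Γ1 \ {alpha0 N}) k p := by
  intro l hl
  match l with
  | 0 =>
    have h0 := h 0 hl
    simp only [pow_zero, Equiv.Perm.one_apply] at h0 ⊢
    exact inP_avoid hΓ1 h0 hp
  | (l+1) =>
    have ha := h l (by omega)
    have hb := h (l+1) hl
    have e1 : (C ^ (l+1)) p.1 = C ((C ^ l) p.1) := by rw [pow_succ', Equiv.Perm.mul_apply]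
    have e2 : (C ^ (l+1)) p.2 = C ((C ^ l) p.2) := by rw [pow_succ', Equiv.Perm.mul_apply]
    rw [e1, e2] at hb ⊢
    exact key hΓ1 hΓ2 hmap hα0 ((C ^ l) p.1, (C ^ l) p.2) ha hb

lemma tau_neg {C : Equiv.Perm (Fin N)} {Γ1 : Set (Fin N × Fin N)}
    (hΓ1 : Γ1 ⊂ {p : Fin N × Fin N | p.2 = C0std N p.1})
    {k : ℕ} {p : Fin N × Fin N} (hk : 1 ≤ k)
    (h : tauDef (Fin N) (C0std N) C (Γ1 \ {alpha0 N}) k p) : p.1 < p.2 := by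
  have h0 := h 0 hk
  simp only [pow_zero, Equiv.Perm.one_apply] at h0
  have hnm : alpha0 N ∉ Γ1 \ {alpha0 N} := fun hc => hc.2 rfl
  exact inP_pos (Set.diff_subset.trans hΓ1.subset) hnm h0

end helpers2

section algebra
variable {N : ℕ} [NeZero N]

lemma ptensor_split :
    Ptensor N =
      (∑ p ∈ Finset.univ.filter (fun p : Fin N × Fin N => p.1 < p.2),
        E (Fin N) p.1 p.2 ⊗ₜ[ℂ] E (Fin N) p.2 p.1)
      + (∑ p ∈ Finset.univ.filter (fun p : Fin N × Fin N => p.1 < p.2),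
        E (Fin N) p.2 p.1 ⊗ₜ[ℂ] E (Fin N) p.1 p.2)
      + ∑ i : Fin N, E (Fin N) i i ⊗ₜ[ℂ] E (Fin N) i i := by
  have step1 : Ptensor N =
      (∑ p : Fin N × Fin N, if p.1 < p.2 then E (Fin N) p.1 p.2 ⊗ₜ[ℂ] E (Fin N) p.2 p.1 else 0)
      + (∑ p : Fin N × Fin N, if p.2 < p.1 then E (Fin N) p.1 p.2 ⊗ₜ[ℂ] E (Fin N) p.2 p.1 else 0)
      + (∑ p : Fin N × Fin N, if p.1 = p.2 then E (Fin N) p.1 p.2 ⊗ₜ[ℂ] E (Fin N) p.2 p.1 else 0) := by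
    rw [← Finset.sum_add_distrib, ← Finset.sum_add_distrib, Ptensor]
    apply Finset.sum_congr rfl
    intro p _
    rcases lt_trichotomy p.1 p.2 with h|h|h
    · simp [h, asymm h, h.ne]
    · simp [h, lt_irrefl]
    · simp [h, asymm h, (h.ne).symm, h.ne']
  rw [step1]
  congr 1
  · congr 1
    · rw [Finset.sum_filter]
    · rw [Finset.sum_filter]
      apply Fintype.sum_equiv (Equiv.prodComm (Fin N) (Fin N))
      intro p
      simp only [Equiv.prodComm_apply, Prod.fst_swap, Prod.snd_swap]
      exact if_congr Iff.rfl rfl rfl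
  · rw [Fintype.sum_prod_type]
    apply Finset.sum_congr rfl
    intro i _
    rw [Finset.sum_ite_eq (Finset.univ) i (fun j => E (Fin N) i j ⊗ₜ[ℂ] E (Fin N) j i)]
    simp

lemma rconst_eq (C : Equiv.Perm (Fin N)) (x y y' : ℂ) (hy' : y' ≠ 0) (hne : y ≠ y') :
    rConst N C x (y / y') =
      (1 - x ^ N)⁻¹ • ∑ i : Fin N, ∑ k ∈ Finset.range N,
          x ^ k • (E (Fin N) i i ⊗ₜ[ℂ] E (Fin N) ((C ^ k) i) ((C ^ k) i))
      + ∑ p ∈ Finset.univ.filter (fun p : Fin N × Fin N => p.1 < p.2),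
          E (Fin N) p.1 p.2 ⊗ₜ[ℂ] E (Fin N) p.2 p.1
      + (y / (y' - y)) • Ptensor N := by
  have hsub : y' - y ≠ 0 := sub_ne_zero.mpr (Ne.symm hne)
  have h1 : (y / y') * (1 - y / y')⁻¹ = y / (y' - y) := by field_simp
  have h2 : (1 - y / y')⁻¹ = 1 + y / (y' - y) := by field_simp; ring
  rw [rConst, h1, h2, ptensor_split]
  rw [add_smul, one_smul, smul_add, smul_add]
  abel

end algebra

section sums
variable {N : ℕ} [NeZero N]

open Classical in
lemma sumNeg_eq_zero {Γ1 : Set (Fin N × Fin N)}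
    (hΓ1 : Γ1 ⊂ {p : Fin N × Fin N | p.2 = C0std N p.1})
    (C : Equiv.Perm (Fin N)) (x y y' : ℂ) :
    (∑ k ∈ Finset.Icc 1 N, ∑ p : Fin N × Fin N,
      if tauDef (Fin N) (C0std N) C (Γ1 \ {alpha0 N}) k p ∧ p.2 < p.1 then
        (y * x ^ k) • (E (Fin N) p.1 p.2 ⊗ₜ[ℂ] E (Fin N) ((C ^ k) p.2) ((C ^ k) p.1))
          - (y' * x⁻¹ ^ k) • (E (Fin N) ((C ^ k) p.2) ((C ^ k) p.1) ⊗ₜ[ℂ] E (Fin N) p.1 p.2)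
      else 0) = 0 := by
  apply Finset.sum_eq_zero
  intro k hk
  apply Finset.sum_eq_zero
  intro p _
  rw [if_neg]
  rintro ⟨ht, hlt⟩
  exact absurd (tau_neg hΓ1 (Finset.mem_Icc.mp hk).1 ht) (asymm hlt)

open Classical in
lemma sumPos_eq {C : Equiv.Perm (Fin N)} {Γ1 Γ2 : Set (Fin N × Fin N)}
    (hΓ1 : Γ1 ⊂ {p : Fin N × Fin N | p.2 = C0std N p.1})
    (hΓ2 : Γ2 ⊂ {p : Fin N × Fin N | p.2 = C0std N p.1})
    (hmap : (fun p : Fin N × Fin N => (C p.1, C p.2)) '' Γ1 = Γ2)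
    (hα0 : alpha0 N ∉ Γ2) (x : ℂ) :
    (∑ k ∈ Finset.Icc 1 N, ∑ p : Fin N × Fin N,
      if tauDef (Fin N) (C0std N) C (Γ1 \ {alpha0 N}) k p ∧ p.1 < p.2 then
        x ^ k • (E (Fin N) p.1 p.2 ⊗ₜ[ℂ] E (Fin N) ((C ^ k) p.2) ((C ^ k) p.1))
          - x⁻¹ ^ k • (E (Fin N) ((C ^ k) p.2) ((C ^ k) p.1) ⊗ₜ[ℂ] E (Fin N) p.1 p.2)
      else 0)
    = (∑ k ∈ Finset.Icc 1 N, ∑ p : Fin N × Fin N,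
      if tauDef (Fin N) (C0std N) C Γ1 k p ∧ p.1 < p.2 then
        x ^ k • (E (Fin N) p.1 p.2 ⊗ₜ[ℂ] E (Fin N) ((C ^ k) p.2) ((C ^ k) p.1))
          - x⁻¹ ^ k • (E (Fin N) ((C ^ k) p.2) ((C ^ k) p.1) ⊗ₜ[ℂ] E (Fin N) p.1 p.2)
      else 0) := by
  apply Finset.sum_congr rfl
  intro k _
  apply Finset.sum_congr rfl
  intro p _
  apply if_congr _ rfl rfl
  constructor
  · rintro ⟨ht, hp⟩; exact ⟨tau_mono ht, hp⟩
  · rintro ⟨ht, hp⟩; exact ⟨tau_back hΓ1 hΓ2 hmap hα0 hp ht, hp⟩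

end sums


/-- Lemma `Sch-lem`: removing `α0` from `Γ1` yields again an associative
BD-structure with `α0 ∉ Γ2'`, whose `r`-matrix equals `a(x) + (y/(y'-y))·P`, where `a(x)`
is computed from the original structure. -/
theorem stmt4 (N : ℕ) [NeZero N]
    (C : Equiv.Perm (Fin N))
    (hC : ∀ s t : Fin N, ∃ k : ℕ, (C ^ k) s = t)
    (Γ1 Γ2 : Set (Fin N × Fin N))
    (hΓ1 : Γ1 ⊂ {p : Fin N × Fin N | p.2 = C0std N p.1})
    (hΓ2 : Γ2 ⊂ {p : Fin N × Fin N | p.2 = C0std N p.1})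
    (hmap : (fun p : Fin N × Fin N => (C p.1, C p.2)) '' Γ1 = Γ2)
    (hα0 : alpha0 N ∉ Γ2) :
    Γ1 \ {alpha0 N} ⊂ {p : Fin N × Fin N | p.2 = C0std N p.1}
    ∧ (fun p : Fin N × Fin N => (C p.1, C p.2)) '' (Γ1 \ {alpha0 N})
        ⊂ {p : Fin N × Fin N | p.2 = C0std N p.1}
    ∧ alpha0 N ∉ (fun p : Fin N × Fin N => (C p.1, C p.2)) '' (Γ1 \ {alpha0 N})
    ∧ (∀ x y y' : ℂ, x ≠ 0 → x ^ N ≠ 1 → y ≠ 0 → y' ≠ 0 → y ≠ y' →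
        rX N C (Γ1 \ {alpha0 N}) x y y'
          = aFun N C Γ1 x + (y / (y' - y)) • Ptensor N) := by
  have himg : (fun p : Fin N × Fin N => (C p.1, C p.2)) '' (Γ1 \ {alpha0 N}) ⊆ Γ2 := by
    rw [← hmap]; exact Set.image_mono Set.diff_subset
  refine ⟨ssubset_of_subset_of_ssubset Set.diff_subset hΓ1,
    ssubset_of_subset_of_ssubset himg hΓ2, fun hc => hα0 (himg hc), ?_⟩
  intro x y y' hx hxN hy hy' hne
  simp only [rX, aFun]
  rw [sumNeg_eq_zero hΓ1 C x y y']
  simp only [add_zero]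
  rw [sumPos_eq hΓ1 hΓ2 hmap hα0 x, rconst_eq C x y y' hy' hne]
  abel
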